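/- Let n ≥ 1 and let x_1, …, x_n be distinct points on the unit circle S = {p ∈ ℝ² : ‖p‖ = 1}, listed in cyclic order, i.e. x_k = (cos θ_k, sin θ_k) with 0 ≤ θ_1 < θ_2 < ⋯ < θ_n < 2π; call x_i and x_j adjacent if |i − j| ≡ 1 (mod n) (for n = 1 there are no non-adjacent pairs, for n = 2 both points are adjacent). Then there is NO finite collection Γ of injective continuous paths γ : [0,1] → D̄ = {p ∈ ℝ² : ‖p‖ ≤ 1} satisfying all of: (1) each γ ∈ Γ has γ(0) and γ(1) among {x_1,…,x_n} with γ(0) ≠ γ(1), and γ(t) lies in the open disc {p : ‖p‖ < 1} for all t ∈ (0,1); (2) every marked point x_k is an endpoint of at least one path in Γ, and for every pair of distinct marked points there is at most one path in Γ whose endpoint set is that pair; (3) for any two distinct paths γ, γ' ∈ Γ, the images γ([0,1]) and γ'([0,1]) intersect only in common endpoints, i.e. γ([0,1]) ∩ γ'([0,1]) ⊆ {γ(0),γ(1)} ∩ {γ'(0),γ'(1)}; (4) no path in Γ has as endpoint set a pair of adjacent marked points. -/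

import Mathlib

open Real Set

/-- The point `(cos t, sin t)` on the unit circle in the euclidean plane. -/
noncomputable def circlePt (t : ℝ) : EuclideanSpace ℝ (Fin 2) :=
  (WithLp.equiv 2 (Fin 2 → ℝ)).symm ![Real.cos t, Real.sin t]

/-- Two indices `k, l` of `n` cyclically ordered points are adjacent iff
`|k − l| ≡ 1 (mod n)`. -/
def CyclicAdj (n : ℕ) (k l : Fin n) : Prop :=
  (k.1 + 1) % n = l.1 ∨ (l.1 + 1) % n = k.1

/-- let `x_1, …, x_n` (n ≥ 1) be distinct points in cyclic order on the unit
circle, `x_k = (cos θ_k, sin θ_k)` with `0 ≤ θ_1 < ⋯ < θ_n < 2π`. There is no finite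
collection `Γ` of injective continuous paths in the closed unit disc such that:
(1) each path starts and ends at distinct marked points and otherwise stays in the open
disc; (2) every marked point is an endpoint of some path, and each pair of distinct marked
points is the endpoint set of at most one path; (3) distinct paths meet only in common
endpoints; (4) no path joins two adjacent marked points. -/
/- ===== auxiliary lemmas ===== -/

private lemma intEq0 {m : ℤ} {x : ℝ} (h1 : 0 < x + 2*π*m) (h2 : x + 2*π*m < 2*π)
    (h3 : 0 < x) (h4 : x < 2*π) : m = 0 := by
  have hπ := Real.pi_pos
  by_contra hm
  rcases lt_or_gt_of_ne hm with h | h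
  · have : (m:ℝ) ≤ -1 := by exact_mod_cast (by omega : m ≤ -1)
    nlinarith
  · have : (1:ℝ) ≤ m := by exact_mod_cast (by omega : 1 ≤ m)
    nlinarith

/-- direction from a boundary point `q` to any other point `p` of the disc points
"inward": `re ((p-q) * conj q) < 0`. -/
private lemma halfPlane {p q : ℂ} (hp : ‖p‖ ≤ 1) (hq : ‖q‖ = 1)
    (hne : p ≠ q) : ((p - q) * (starRingEnd ℂ) q).re < 0 := by
  have h1 : (p * (starRingEnd ℂ) q).re ≤ 1 := by
    calc (p * (starRingEnd ℂ) q).re ≤ ‖p * (starRingEnd ℂ) q‖ := Complex.re_le_norm _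
    _ = ‖p‖ * ‖q‖ := by rw [norm_mul, Complex.norm_conj]
    _ ≤ 1 := by rw [hq]; simpa using hp
  have hqq : q * (starRingEnd ℂ) q = 1 := by
    rw [Complex.mul_conj]
    norm_cast
    rw [← Complex.sq_norm, hq]; norm_num
  rcases lt_or_eq_of_le h1 with h | h
  · have : ((p - q) * (starRingEnd ℂ) q).re = (p * (starRingEnd ℂ) q).re - 1 := by
      rw [sub_mul, hqq]; simp
    linarith
  · exfalso
    -- equality forces p = q
    set z := p * (starRingEnd ℂ) q with hz
    have hzabs : ‖z‖ ≤ 1 := by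
      rw [hz, norm_mul, Complex.norm_conj, hq]; simpa using hp
    have hre : z.re = 1 := h
    have him : z.im = 0 := by
      have := Complex.sq_norm z
      rw [Complex.normSq_apply] at this
      nlinarith [norm_nonneg z]
    have hz1 : z = 1 := by
      apply Complex.ext <;> simp [hre, him]
    apply hne
    have : p * ((starRingEnd ℂ) q) = q * (starRingEnd ℂ) q := by rw [hqq, hz1.symm.trans hz]
    have hqne : (starRingEnd ℂ) q ≠ 0 := by
      simp only [ne_eq, map_eq_zero]
      intro h0; rw [h0] at hq; simp at hq
    exact mul_right_cancel₀ hqne this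

/-- If a continuous real function has `cos (u t - ψ) < 0` on `[0,1]`, then its endpoint
values lie in a common interval `(ψ + π/2 + 2πk, ψ + 3π/2 + 2πk)`. -/
private lemma edge_trap {u : ℝ → ℝ} (hu : ContinuousOn u (Icc 0 1)) {ψ : ℝ}
    (h : ∀ t ∈ Icc (0:ℝ) 1, Real.cos (u t - ψ) < 0) :
    ∃ k : ℤ, (u 0 ∈ Ioo (ψ + π/2 + 2*π*k) (ψ + 3*π/2 + 2*π*k)) ∧
      (u 1 ∈ Ioo (ψ + π/2 + 2*π*k) (ψ + 3*π/2 + 2*π*k)) := by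
  have hπ := Real.pi_pos
  set v : ℝ → ℝ := fun t => (u t - ψ - π/2) / (2*π) with hv
  have hvc : ContinuousOn v (Icc 0 1) := by
    apply ContinuousOn.div_const
    exact (hu.sub continuousOn_const).sub continuousOn_const
  have key : ∀ t ∈ Icc (0:ℝ) 1, Int.fract (v t) ∈ Ioo (0:ℝ) (1/2) := by
    intro t ht
    have hsin : Real.sin (2*π * v t) > 0 := by
      have : 2*π * v t = (u t - ψ) - π/2 := by
        rw [hv]; field_simp
      rw [this, Real.sin_sub_pi_div_two]
      linarith [h t ht]
    have hper : Real.sin (2*π * Int.fract (v t)) > 0 := by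
      have : 2*π * Int.fract (v t) = 2*π * v t + (-⌊v t⌋ : ℤ) * (2*π) := by
        rw [Int.fract]; push_cast; ring
      rw [this, Real.sin_add_int_mul_two_pi]
      exact hsin
    have hfr0 : (0:ℝ) ≤ Int.fract (v t) := Int.fract_nonneg _
    have hfr1 : Int.fract (v t) < 1 := Int.fract_lt_one _
    constructor
    · rcases lt_or_eq_of_le hfr0 with h' | h'
      · exact h'
      · exfalso; rw [← h'] at hper; simp at hper
    · by_contra hle
      push_neg at hle
      have : Real.sin (2*π * Int.fract (v t)) ≤ 0 := by
        have h2 : π ≤ 2*π * Int.fract (v t) := by nlinarith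
        have h3 : 2*π * Int.fract (v t) ≤ 2*π := by nlinarith
        have := Real.sin_nonneg_of_nonneg_of_le_pi (x := 2*π * Int.fract (v t) - π)
          (by linarith) (by linarith)
        rw [Real.sin_sub_pi] at this
        linarith
      linarith
  have hfloor : ⌊v 0⌋ = ⌊v 1⌋ := by
    by_contra hne
    have h0 : (0:ℝ) ∈ Icc (0:ℝ) 1 := by norm_num
    have h1 : (1:ℝ) ∈ Icc (0:ℝ) 1 := by norm_num
    have hnoint : ∀ t ∈ Icc (0:ℝ) 1, ∀ m : ℤ, v t ≠ m := by
      intro t ht m hm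
      have := (key t ht).1
      rw [hm, Int.fract_intCast] at this
      exact lt_irrefl _ this
    rcases lt_or_gt_of_ne hne with hlt | hlt
    · have hm : (⌊v 1⌋ : ℝ) ∈ Icc (v 0) (v 1) := by
        constructor
        · have : v 0 < ⌊v 0⌋ + 1 := Int.lt_floor_add_one _
          have : v 0 < (⌊v 1⌋:ℝ) := by
            have : ((⌊v 0⌋:ℝ) + 1) ≤ (⌊v 1⌋:ℝ) := by exact_mod_cast (by omega : ⌊v 0⌋ + 1 ≤ ⌊v 1⌋)
            linarith [Int.lt_floor_add_one (v 0)]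
          linarith
        · exact Int.floor_le _
      obtain ⟨t, ht, hvt⟩ := intermediate_value_Icc (by norm_num : (0:ℝ) ≤ 1) hvc hm
      exact hnoint t ht _ hvt
    · have hm : (⌊v 0⌋ : ℝ) ∈ Icc (v 1) (v 0) := by
        constructor
        · have : ((⌊v 1⌋:ℝ) + 1) ≤ (⌊v 0⌋:ℝ) := by exact_mod_cast (by omega : ⌊v 1⌋ + 1 ≤ ⌊v 0⌋)
          linarith [Int.lt_floor_add_one (v 1)]
        · exact Int.floor_le _
      obtain ⟨t, ht, hvt⟩ := intermediate_value_Icc' (by norm_num : (0:ℝ) ≤ 1) hvc hm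
      exact hnoint t ht _ hvt
  refine ⟨⌊v 0⌋, ?_, ?_⟩
  · have hk := key 0 (by norm_num)
    have : u 0 = ψ + π/2 + 2*π * v 0 := by rw [hv]; field_simp; ring
    rw [Int.fract] at hk
    constructor
    · rw [this]; nlinarith [hk.1]
    · rw [this]; nlinarith [hk.2]
  · have hk := key 1 (by norm_num)
    have : u 1 = ψ + π/2 + 2*π * v 1 := by rw [hv]; field_simp; ring
    rw [Int.fract] at hk
    rw [hfloor]
    constructor
    · rw [this]; nlinarith [hk.1]
    · rw [this]; nlinarith [hk.2]

private lemma exp_arg_eq {z : ℂ} (hz : z ≠ 0) :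
    Complex.exp ((Complex.arg z : ℝ) * Complex.I) = z / ‖z‖ := by
  have h := Complex.norm_mul_exp_arg_mul_I z
  have habs : (‖z‖ : ℂ) ≠ 0 := by
    simp only [ne_eq, Complex.ofReal_eq_zero, norm_eq_zero]
    exact hz
  rw [eq_div_iff habs, mul_comm]
  exact h

private lemma telescope (h : ℕ → ℂ) (hne : ∀ k, h k ≠ 0) (m : ℕ) :
    Complex.exp ((((h 0).arg + ∑ k ∈ Finset.range m, ((h (k+1)) / (h k)).arg : ℝ)) * Complex.I)
      = h m / ‖h m‖ := by
  induction m with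
  | zero => simpa using exp_arg_eq (hne 0)
  | succ m ih =>
    rw [Finset.sum_range_succ, ← add_assoc]
    have e1 : ((((h 0).arg + ∑ k ∈ Finset.range m, ((h (k+1)) / (h k)).arg) +
        ((h (m+1)) / (h m)).arg : ℝ) : ℂ) * Complex.I
        = (((h 0).arg + ∑ k ∈ Finset.range m, ((h (k+1)) / (h k)).arg : ℝ) : ℂ) * Complex.I
          + ((((h (m+1)) / (h m)).arg : ℝ) : ℂ) * Complex.I := by
      push_cast; ring
    rw [e1, Complex.exp_add, ih, exp_arg_eq (div_ne_zero (hne (m+1)) (hne m))]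
    have hm : (‖h m‖ : ℂ) ≠ 0 := by
      simp only [ne_eq, Complex.ofReal_eq_zero, norm_eq_zero]; exact hne m
    have hm1 : (‖h (m+1)‖ : ℂ) ≠ 0 := by
      simp only [ne_eq, Complex.ofReal_eq_zero, norm_eq_zero]; exact hne (m+1)
    rw [norm_div]
    push_cast
    field_simp [hne m]

private lemma re_div_pos {z w : ℂ} (hw : w ≠ 0) (h : ‖z - w‖ < ‖w‖) :
    0 < (z / w).re := by
  have h1 : ‖z / w - 1‖ < 1 := by
    have : z / w - 1 = (z - w) / w := by field_simp
    rw [this, norm_div, div_lt_one (norm_pos_iff.mpr hw)]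
    exact h
  have h2 := Complex.abs_re_le_norm (z / w - 1)
  have : (z / w - 1).re = (z / w).re - 1 := by simp
  rw [this] at h2
  have h3 : |(z / w).re - 1| < 1 := lt_of_le_of_lt h2 h1
  linarith [(abs_lt.mp h3).1]

/-- Two paths in the closed unit disc whose boundary endpoints interleave on the circle
must intersect. -/
private lemma crossing {A B C D : ℝ} (hAB : A < B) (hBC : B < C) (hCD : C < D)
    (hDA : D < A + 2*π) {α β : ℝ → ℂ}
    (hαc : ContinuousOn α (Icc 0 1)) (hβc : ContinuousOn β (Icc 0 1))
    (hα1 : ∀ t ∈ Icc (0:ℝ) 1, ‖α t‖ ≤ 1)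
    (hβ1 : ∀ t ∈ Icc (0:ℝ) 1, ‖β t‖ ≤ 1)
    (hA : α 0 = Complex.exp (A * Complex.I)) (hC : α 1 = Complex.exp (C * Complex.I))
    (hB : β 0 = Complex.exp (B * Complex.I)) (hD : β 1 = Complex.exp (D * Complex.I))
    (hdisj : ∀ s ∈ Icc (0:ℝ) 1, ∀ t ∈ Icc (0:ℝ) 1, α s ≠ β t) : False := by
  have hπ := Real.pi_pos
  -- clamping
  set cl : ℝ → ℝ := fun t => max 0 (min 1 t) with hcl
  have hclc : Continuous cl := continuous_const.max (continuous_const.min continuous_id)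
  have hclmem : ∀ t, cl t ∈ Icc (0:ℝ) 1 :=
    fun t => ⟨le_max_left _ _, max_le (by norm_num) (min_le_left _ _)⟩
  have hclid : ∀ t ∈ Icc (0:ℝ) 1, cl t = t := by
    intro t ht
    simp only [hcl]
    rw [min_eq_right ht.2, max_eq_right ht.1]
  set α' : ℝ → ℂ := α ∘ cl with hα'
  set β' : ℝ → ℂ := β ∘ cl with hβ'
  have hα'c : Continuous α' := hαc.comp_continuous hclc hclmem
  have hβ'c : Continuous β' := hβc.comp_continuous hclc hclmem
  set F : ℝ × ℝ → ℂ := fun p => α' p.1 - β' p.2 with hF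
  have hFc : Continuous F := (hα'c.comp continuous_fst).sub (hβ'c.comp continuous_snd)
  have hFne : ∀ p, F p ≠ 0 := by
    intro p
    exact sub_ne_zero.2 (hdisj _ (hclmem _) _ (hclmem _))
  -- the square
  set sq : Set (ℝ × ℝ) := (Icc 0 1) ×ˢ (Icc 0 1) with hsq
  have hsqc : IsCompact sq := isCompact_Icc.prod isCompact_Icc
  have hsqne : sq.Nonempty := ⟨(0,0), by constructor <;> norm_num⟩
  -- minimum of |F| on the square
  obtain ⟨p₀, hp₀, hp₀min⟩ :=
    hsqc.exists_isMinOn hsqne ((continuous_norm.comp hFc).continuousOn)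
  set ε : ℝ := ‖F p₀‖ with hε
  have hεpos : 0 < ε := norm_pos_iff.mpr (hFne p₀)
  have hεle : ∀ p ∈ sq, ε ≤ ‖F p‖ := fun p hp => hp₀min hp
  -- uniform continuity
  have huc := hsqc.uniformContinuousOn_of_continuous hFc.continuousOn
  rw [Metric.uniformContinuousOn_iff] at huc
  obtain ⟨δ, hδpos, hδ⟩ := huc ε hεpos
  obtain ⟨N, hN⟩ := exists_nat_gt (1/δ)
  have hNpos : 0 < N := by
    have h0 : (0:ℝ) < 1/δ := by positivity
    exact_mod_cast h0.trans hN
  have hNR : (0:ℝ) < N := by exact_mod_cast hNpos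
  -- the subdivision points
  set c : ℕ → ℝ := fun k => (k:ℝ)/N with hc
  have hcmem : ∀ k, k ≤ N → c k ∈ Icc (0:ℝ) 1 := by
    intro k hk
    constructor
    · positivity
    · rw [hc]
      rw [div_le_one hNR]
      exact_mod_cast hk
  have hsmulmem : ∀ p ∈ sq, ∀ k ≤ N, c k • p ∈ sq := by
    intro p hp k hk
    have h1 := (hcmem k hk)
    constructor
    · constructor
      · exact mul_nonneg h1.1 hp.1.1
      · calc c k * p.1 ≤ 1 * 1 := mul_le_mul h1.2 hp.1.2 hp.1.1 zero_le_one
        _ = 1 := by norm_num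
    · constructor
      · exact mul_nonneg h1.1 hp.2.1
      · calc c k * p.2 ≤ 1 * 1 := mul_le_mul h1.2 hp.2.2 hp.2.1 zero_le_one
        _ = 1 := by norm_num
  have hclose : ∀ p ∈ sq, ∀ k, k < N →
      ‖F (c (k+1) • p) - F (c k • p)‖ < ε := by
    intro p hp k hk
    have h1 : c (k+1) • p ∈ sq := hsmulmem p hp (k+1) hk
    have h2 : c k • p ∈ sq := hsmulmem p hp k hk.le
    have hdist : dist (c (k+1) • p) (c k • p) < δ := by
      rw [Prod.dist_eq]
      have hd : ∀ x : ℝ, 0 ≤ x → x ≤ 1 → dist (c (k+1) * x) (c k * x) < δ := by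
        intro x hx0 hx1
        rw [Real.dist_eq, ← sub_mul]
        have hstep : c (k+1) - c k = 1/N := by
          rw [hc]
          push_cast
          field_simp
          ring
        rw [hstep, abs_of_nonneg (by positivity : (0:ℝ) ≤ 1/N * x)]
        calc 1/N * x ≤ 1/N * 1 := by
              apply mul_le_mul_of_nonneg_left hx1 (by positivity)
        _ = 1/N := by norm_num
        _ < δ := by
              rw [div_lt_iff₀ hNR, ← div_lt_iff₀' hδpos]
              exact hN
      have e1 : (c (k+1) • p).1 = c (k+1) * p.1 := rfl
      have e2 : (c k • p).1 = c k * p.1 := rfl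
      have e3 : (c (k+1) • p).2 = c (k+1) * p.2 := rfl
      have e4 : (c k • p).2 = c k * p.2 := rfl
      rw [e1, e2, e3, e4]
      exact max_lt (hd p.1 hp.1.1 hp.1.2) (hd p.2 hp.2.1 hp.2.2)
    have := hδ _ h1 _ h2 hdist
    rwa [Complex.dist_eq] at this
  -- the lifted angle function
  set G : ℝ × ℝ → ℝ := fun p => (F (c 0 • p)).arg +
      ∑ k ∈ Finset.range N, ((F (c (k+1) • p)) / (F (c k • p))).arg with hG
  have hsmulc : ∀ k : ℕ, Continuous (fun p : ℝ × ℝ => F (c k • p)) := by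
    intro k
    exact hFc.comp (continuous_const_smul (c k))
  have hratio_slit : ∀ p ∈ sq, ∀ k, k < N →
      (F (c (k+1) • p)) / (F (c k • p)) ∈ Complex.slitPlane := by
    intro p hp k hk
    rw [Complex.mem_slitPlane_iff]
    left
    apply re_div_pos (hFne _)
    exact lt_of_lt_of_le (hclose p hp k hk) (hεle _ (hsmulmem p hp k hk.le))
  have hGc : ContinuousOn G sq := by
    apply ContinuousOn.add
    · have hc0 : ∀ p : ℝ × ℝ, c 0 • p = (0:ℝ×ℝ) := by
        intro p
        have : c 0 = 0 := by rw [hc]; norm_num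
        rw [this, zero_smul]
      have he : (fun p : ℝ × ℝ => (F (c 0 • p)).arg) = fun _ => (F (0:ℝ×ℝ)).arg := by
        funext p; rw [hc0]
      rw [he]
      exact continuousOn_const
    · apply continuousOn_finset_sum
      intro k hk
      rw [Finset.mem_range] at hk
      intro p hp
      apply ContinuousAt.continuousWithinAt
      have hr : ContinuousAt (fun p : ℝ × ℝ => F (c (k+1) • p) / F (c k • p)) p :=
        ((hsmulc (k+1)).continuousAt).div ((hsmulc k).continuousAt) (hFne (c k • p))
      show ContinuousAt (Complex.arg ∘ (fun p : ℝ × ℝ => F (c (k+1) • p) / F (c k • p))) p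
      exact ContinuousAt.comp (x := p) (g := Complex.arg)
        (f := fun p : ℝ × ℝ => F (c (k+1) • p) / F (c k • p))
        (Complex.continuousAt_arg (hratio_slit p hp k hk)) hr
  -- the lift identity
  have hlift : ∀ p, Complex.exp ((G p : ℝ) * Complex.I) = F p / ‖F p‖ := by
    intro p
    have hcN : c N • p = p := by
      have : c N = 1 := by rw [hc]; exact div_self (ne_of_gt hNR)
      rw [this, one_smul]
    have ht := telescope (fun k => F (c k • p)) (fun k => hFne _) N
    rw [hcN] at ht
    exact ht
  -- transfer of half-plane conditions to the lift
  have hcos : ∀ p ∈ sq, ∀ ψ : ℝ, ((F p) * Complex.exp (-(ψ:ℂ) * Complex.I)).re < 0 →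
      Real.cos (G p - ψ) < 0 := by
    intro p _ ψ h
    have h1 : Complex.exp (((G p - ψ : ℝ):ℂ) * Complex.I)
        = (F p * Complex.exp (-(ψ:ℂ) * Complex.I)) / (‖F p‖ : ℂ) := by
      have e : ((G p - ψ : ℝ):ℂ) * Complex.I
          = ((G p : ℝ):ℂ) * Complex.I + (-(ψ:ℂ)) * Complex.I := by push_cast; ring
      rw [e, Complex.exp_add, hlift p, div_mul_eq_mul_div]
    have h2 : Real.cos (G p - ψ)
        = ((F p * Complex.exp (-(ψ:ℂ) * Complex.I)) / (‖F p‖:ℂ)).re := by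
      rw [← h1, Complex.exp_ofReal_mul_I_re]
    rw [h2, Complex.div_ofReal_re]
    exact div_neg_of_neg_of_pos h (norm_pos_iff.mpr (hFne p))
  have hconj : ∀ x : ℝ, (starRingEnd ℂ) (Complex.exp ((x:ℂ) * Complex.I))
      = Complex.exp (-(x:ℂ) * Complex.I) := by
    intro x
    rw [← Complex.exp_conj]
    congr 1
    simp only [map_mul, Complex.conj_I, Complex.conj_ofReal]
    ring
  have habsexp : ∀ x : ℝ, ‖Complex.exp ((x:ℂ) * Complex.I)‖ = 1 := by
    intro x
    exact Complex.norm_exp_ofReal_mul_I x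
  have hcl0 : cl 0 = 0 := hclid 0 ⟨le_refl 0, zero_le_one⟩
  have hcl1 : cl 1 = 1 := hclid 1 ⟨zero_le_one, le_refl 1⟩
  have hmem0 : (0:ℝ) ∈ Icc (0:ℝ) 1 := ⟨le_refl 0, zero_le_one⟩
  have hmem1 : (1:ℝ) ∈ Icc (0:ℝ) 1 := ⟨zero_le_one, le_refl 1⟩
  have hβ'0 : β' 0 = Complex.exp ((B:ℂ) * Complex.I) := by
    rw [hβ']; simp only [Function.comp_apply, hcl0]; exact hB
  have hβ'1 : β' 1 = Complex.exp ((D:ℂ) * Complex.I) := by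
    rw [hβ']; simp only [Function.comp_apply, hcl1]; exact hD
  have hα'0 : α' 0 = Complex.exp ((A:ℂ) * Complex.I) := by
    rw [hα']; simp only [Function.comp_apply, hcl0]; exact hA
  have hα'1 : α' 1 = Complex.exp ((C:ℂ) * Complex.I) := by
    rw [hα']; simp only [Function.comp_apply, hcl1]; exact hC
  have hα'mem : ∀ s, ‖α' s‖ ≤ 1 := fun s => hα1 (cl s) (hclmem s)
  have hβ'mem : ∀ t, ‖β' t‖ ≤ 1 := fun t => hβ1 (cl t) (hclmem t)
  have hne' : ∀ s t, α' s ≠ β' t := fun s t => hdisj (cl s) (hclmem s) (cl t) (hclmem t)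
  -- edge t = 0, half-plane direction B
  obtain ⟨kb, hPb0, hPb1⟩ := edge_trap (u := fun s => G (s, 0))
      (hGc.comp (continuous_id.prodMk continuous_const).continuousOn
        (fun s hs => ⟨hs, hmem0⟩)) (ψ := B)
      (by
        intro s hs
        apply hcos (s, 0) ⟨hs, hmem0⟩
        have e : F (s, 0) = α' s - Complex.exp ((B:ℂ) * Complex.I) := by
          rw [hF]; simp only []; rw [hβ'0]
        rw [e, ← hconj B]
        apply halfPlane (hα'mem s) (habsexp B)
        rw [← hβ'0]; exact hne' s 0)
  -- edge t = 1, half-plane direction D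
  obtain ⟨kd, hPd0, hPd1⟩ := edge_trap (u := fun s => G (s, 1))
      (hGc.comp (continuous_id.prodMk continuous_const).continuousOn
        (fun s hs => ⟨hs, hmem1⟩)) (ψ := D)
      (by
        intro s hs
        apply hcos (s, 1) ⟨hs, hmem1⟩
        have e : F (s, 1) = α' s - Complex.exp ((D:ℂ) * Complex.I) := by
          rw [hF]; simp only []; rw [hβ'1]
        rw [e, ← hconj D]
        apply halfPlane (hα'mem s) (habsexp D)
        rw [← hβ'1]; exact hne' s 1)
  -- edge s = 0, half-plane direction A + π
  obtain ⟨ka, hPa0, hPa1⟩ := edge_trap (u := fun t => G (0, t))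
      (hGc.comp (continuous_const.prodMk continuous_id).continuousOn
        (fun t ht => ⟨hmem0, ht⟩)) (ψ := A + π)
      (by
        intro t ht
        apply hcos (0, t) ⟨hmem0, ht⟩
        have e : F (0, t) = Complex.exp ((A:ℂ) * Complex.I) - β' t := by
          rw [hF]; simp only []; rw [hα'0]
        have eexp : Complex.exp (-((A + π : ℝ):ℂ) * Complex.I)
            = - Complex.exp (-(A:ℂ) * Complex.I) := by
          have : (-((A + π : ℝ):ℂ)) * Complex.I
              = (-(A:ℂ)) * Complex.I + (-(π:ℂ)) * Complex.I := by push_cast; ring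
          rw [this, Complex.exp_add]
          have : Complex.exp ((-(π:ℂ)) * Complex.I) = -1 := by
            have h := Complex.exp_pi_mul_I
            have : ((-(π:ℂ)) * Complex.I) = -((π:ℂ) * Complex.I) := by ring
            rw [this, Complex.exp_neg, h]
            norm_num
          rw [this]
          ring
        rw [e, eexp]
        have halg : (Complex.exp ((A:ℂ) * Complex.I) - β' t) *
            (-Complex.exp (-(A:ℂ) * Complex.I))
            = (β' t - Complex.exp ((A:ℂ) * Complex.I)) * Complex.exp (-(A:ℂ) * Complex.I) := by
          ring
        rw [halg, ← hconj A]
        apply halfPlane (hβ'mem t) (habsexp A)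
        rw [← hα'0]; exact (hne' 0 t).symm)
  -- edge s = 1, half-plane direction C + π
  obtain ⟨kc, hPc0, hPc1⟩ := edge_trap (u := fun t => G (1, t))
      (hGc.comp (continuous_const.prodMk continuous_id).continuousOn
        (fun t ht => ⟨hmem1, ht⟩)) (ψ := C + π)
      (by
        intro t ht
        apply hcos (1, t) ⟨hmem1, ht⟩
        have e : F (1, t) = Complex.exp ((C:ℂ) * Complex.I) - β' t := by
          rw [hF]; simp only []; rw [hα'1]
        have eexp : Complex.exp (-((C + π : ℝ):ℂ) * Complex.I)
            = - Complex.exp (-(C:ℂ) * Complex.I) := by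
          have : (-((C + π : ℝ):ℂ)) * Complex.I
              = (-(C:ℂ)) * Complex.I + (-(π:ℂ)) * Complex.I := by push_cast; ring
          rw [this, Complex.exp_add]
          have : Complex.exp ((-(π:ℂ)) * Complex.I) = -1 := by
            have h := Complex.exp_pi_mul_I
            have : ((-(π:ℂ)) * Complex.I) = -((π:ℂ) * Complex.I) := by ring
            rw [this, Complex.exp_neg, h]
            norm_num
          rw [this]
          ring
        rw [e, eexp]
        have halg : (Complex.exp ((C:ℂ) * Complex.I) - β' t) *
            (-Complex.exp (-(C:ℂ) * Complex.I))
            = (β' t - Complex.exp ((C:ℂ) * Complex.I)) * Complex.exp (-(C:ℂ) * Complex.I) := by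
          ring
        rw [halg, ← hconj C]
        apply halfPlane (hβ'mem t) (habsexp C)
        rw [← hα'1]; exact (hne' 1 t).symm)
  -- now the corner bookkeeping
  simp only [Set.mem_Ioo] at hPa0 hPa1 hPb0 hPb1 hPc0 hPc1 hPd0 hPd1
  -- corner (0,0): edges (t=0) and (s=0)
  have e1 : kb - ka = 0 := by
    apply intEq0 (x := B - A) (m := kb - ka)
    · push_cast
      have h1 := hPa0.1
      have h2 := hPb0.2
      linarith
    · push_cast
      have h1 := hPb0.1
      have h2 := hPa0.2
      linarith
    · linarith
    · linarith
  -- corner (1,0): edges (t=0) and (s=1)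
  have e2 : kc - kb + 1 = 0 := by
    apply intEq0 (x := C - B) (m := kc - kb + 1)
    · push_cast
      have h1 := hPb1.1
      have h2 := hPc0.2
      linarith
    · push_cast
      have h1 := hPc0.1
      have h2 := hPb1.2
      linarith
    · linarith
    · linarith
  -- corner (1,1): edges (s=1) and (t=1)
  have e3 : kd - kc = 0 := by
    apply intEq0 (x := D - C) (m := kd - kc)
    · push_cast
      have h1 := hPc1.1
      have h2 := hPd1.2
      linarith
    · push_cast
      have h1 := hPd1.1
      have h2 := hPc1.2
      linarith
    · linarith
    · linarith
  -- corner (0,1): edges (t=1) and (s=0)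
  have e4 : kd - ka = 0 := by
    apply intEq0 (x := D - A) (m := kd - ka)
    · push_cast
      have h1 := hPa1.1
      have h2 := hPd0.2
      linarith
    · push_cast
      have h1 := hPd0.1
      have h2 := hPa1.2
      linarith
    · linarith
    · linarith
  omega

private lemma mod_char {n x : ℕ} (hx : x < 2*n) (hn : 0 < n) :
    x % n = if x < n then x else x - n := by
  split_ifs with h
  · exact Nat.mod_eq_of_lt h
  · rw [Nat.mod_eq_sub_mod (by omega), Nat.mod_eq_of_lt (by omega)]

private lemma offset_lemma {n k l : ℕ} (hk : k < n) (hl : l < n) (hne : k ≠ l)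
    (hadj : ¬((k+1) % n = l ∨ (l+1) % n = k)) :
    2 ≤ (l + n - k) % n ∧ (l + n - k) % n ≤ n - 2 := by
  push_neg at hadj
  obtain ⟨h1, h2⟩ := hadj
  have hn : 0 < n := by omega
  rw [mod_char (by omega) hn] at h1 h2 ⊢
  split_ifs at * <;> omega

private lemma offset_inv {n a b : ℕ} (ha : a < n) (hb : b < n) :
    (a + (b + n - a) % n) % n = b := by
  have hn : 0 < n := by omega
  rw [mod_char (x := b + n - a) (by omega) hn]
  split_ifs with h
  · rw [mod_char (by omega) hn]
    split_ifs <;> omega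
  · rw [mod_char (by omega) hn]
    split_ifs <;> omega

private lemma offset_unique {n a r1 r2 : ℕ} (ha : a < n) (h1 : r1 < n) (h2 : r2 < n)
    (h : (a + r1) % n = (a + r2) % n) : r1 = r2 := by
  have hn : 0 < n := by omega
  rw [mod_char (by omega) hn, mod_char (by omega) hn] at h
  split_ifs at h <;> omega

private lemma comb {n a m' r' : ℕ} (ha : a < n) (hm' : m' < n)
    (hr' : r' = (m' + n - (a+1) % n) % n) (h2 : 2 ≤ r') (h3 : r' ≤ n - 2) :
    (m' + n - a) % n = r' + 1 := by
  have hn : 0 < n := by omega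
  rcases lt_or_ge (a+1) n with h | h
  · rw [Nat.mod_eq_of_lt h] at hr'
    rw [mod_char (by omega) hn] at hr'
    rw [mod_char (by omega) hn]
    split_ifs at hr' with ha1 <;> split_ifs with hb1 <;> omega
  · have han : a + 1 = n := by omega
    rw [han, Nat.mod_self] at hr'
    rw [mod_char (by omega) hn] at hr'
    rw [mod_char (by omega) hn]
    split_ifs at hr' with ha1 <;> split_ifs with hb1 <;> omega

/-- the isometric embedding of the euclidean plane into `ℂ`. -/
private noncomputable def toC (p : EuclideanSpace ℝ (Fin 2)) : ℂ := ⟨p 0, p 1⟩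

private lemma toC_isometry : Isometry toC := by
  apply Isometry.of_dist_eq
  intro p q
  rw [Complex.dist_eq_re_im, EuclideanSpace.dist_eq]
  simp only [toC, Fin.sum_univ_two, Real.dist_eq, sq_abs]

private lemma toC_abs (p : EuclideanSpace ℝ (Fin 2)) : ‖toC p‖ = ‖p‖ := by
  have h0 : toC 0 = 0 := by
    simp only [toC]
    apply Complex.ext <;> simp
  have := toC_isometry.dist_eq p 0
  rw [h0, Complex.dist_eq, sub_zero, dist_zero_right] at this
  exact this

private lemma toC_circlePt (t : ℝ) :
    toC (circlePt t) = Complex.exp ((t:ℂ) * Complex.I) := by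
  apply Complex.ext
  · simp [toC, circlePt, Complex.exp_ofReal_mul_I_re]
  · simp [toC, circlePt, Complex.exp_ofReal_mul_I_im]

private lemma exp_I_inj {x y : ℝ} (hx : 0 ≤ x) (hx2 : x < 2*π) (hy : 0 ≤ y) (hy2 : y < 2*π)
    (h : Complex.exp ((x:ℂ) * Complex.I) = Complex.exp ((y:ℂ) * Complex.I)) : x = y := by
  have hπ := Real.pi_pos
  rw [Complex.exp_eq_exp_iff_exists_int] at h
  obtain ⟨m, hm⟩ := h
  have h2 : ((x:ℝ):ℂ) * Complex.I = (((y + 2*π*m : ℝ)):ℂ) * Complex.I := by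
    push_cast
    rw [hm]
    ring
  have h3 : (x:ℝ) = y + 2*π*m := by
    have := mul_right_cancel₀ Complex.I_ne_zero h2
    exact_mod_cast this
  have hm0 : m = 0 := by
    by_contra hmne
    rcases lt_or_gt_of_ne hmne with hlt | hgt
    · have : (m:ℝ) ≤ -1 := by exact_mod_cast (by omega : m ≤ -1)
      nlinarith
    · have : (1:ℝ) ≤ m := by exact_mod_cast (by omega : 1 ≤ m)
      nlinarith
  rw [hm0] at h3
  simpa using h3

private lemma exp_I_two_pi_add (x : ℝ) :
    Complex.exp (((x + 2*π : ℝ):ℂ) * Complex.I) = Complex.exp ((x:ℂ) * Complex.I) := by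
  have e : (((x + 2*π : ℝ)):ℂ) * Complex.I = (x:ℂ) * Complex.I + 2*π*Complex.I := by
    push_cast; ring
  rw [e, Complex.exp_add, Complex.exp_two_pi_mul_I, mul_one]

private lemma orient {f : ℝ → ℂ} (hc : ContinuousOn f (Icc 0 1))
    (hb : ∀ t ∈ Icc (0:ℝ) 1, ‖f t‖ ≤ 1) {P Q : ℂ}
    (h : (f 0 = P ∧ f 1 = Q) ∨ (f 0 = Q ∧ f 1 = P)) :
    ∃ g : ℝ → ℂ, ContinuousOn g (Icc 0 1) ∧ (∀ t ∈ Icc (0:ℝ) 1, ‖g t‖ ≤ 1) ∧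
      g 0 = P ∧ g 1 = Q ∧ ∀ t ∈ Icc (0:ℝ) 1, ∃ s ∈ Icc (0:ℝ) 1, g t = f s := by
  rcases h with ⟨h0, h1⟩ | ⟨h0, h1⟩
  · exact ⟨f, hc, hb, h0, h1, fun t ht => ⟨t, ht, rfl⟩⟩
  · have hmap : ∀ t ∈ Icc (0:ℝ) 1, 1 - t ∈ Icc (0:ℝ) 1 := by
      intro t ht
      exact ⟨by linarith [ht.2], by linarith [ht.1]⟩
    refine ⟨fun t => f (1 - t), ?_, ?_, ?_, ?_, ?_⟩
    · exact hc.comp (continuous_const.sub continuous_id).continuousOn hmap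
    · intro t ht; exact hb _ (hmap t ht)
    · simpa using h1
    · simpa using h0
    · intro t ht; exact ⟨1 - t, hmap t ht, rfl⟩

theorem stmt_10 (n : ℕ) (hn : 1 ≤ n) (θ : Fin n → ℝ) (hmono : StrictMono θ)
    (hlo : 0 ≤ θ ⟨0, hn⟩) (hhi : ∀ k, θ k < 2 * π) :
    ¬ ∃ Γ : Set (ℝ → EuclideanSpace ℝ (Fin 2)), Γ.Finite ∧
      (∀ γ ∈ Γ,
        ContinuousOn γ (Icc 0 1) ∧
        InjOn γ (Icc 0 1) ∧
        (∀ t ∈ Icc (0 : ℝ) 1, ‖γ t‖ ≤ 1) ∧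
        (∀ t ∈ Ioo (0 : ℝ) 1, ‖γ t‖ < 1) ∧
        (∃ k l : Fin n, k ≠ l ∧ γ 0 = circlePt (θ k) ∧ γ 1 = circlePt (θ l))) ∧
      (∀ k : Fin n, ∃ γ ∈ Γ, γ 0 = circlePt (θ k) ∨ γ 1 = circlePt (θ k)) ∧
      (∀ γ ∈ Γ, ∀ γ' ∈ Γ, γ ≠ γ' →
        ({γ 0, γ 1} : Set (EuclideanSpace ℝ (Fin 2))) ≠ {γ' 0, γ' 1}) ∧
      (∀ γ ∈ Γ, ∀ γ' ∈ Γ, γ ≠ γ' →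
        γ '' Icc 0 1 ∩ γ' '' Icc 0 1 ⊆
          ({γ 0, γ 1} ∩ {γ' 0, γ' 1} : Set (EuclideanSpace ℝ (Fin 2)))) ∧
      (∀ γ ∈ Γ, ∀ k l : Fin n, γ 0 = circlePt (θ k) → γ 1 = circlePt (θ l) →
        ¬ CyclicAdj n k l) := by
  
  rintro ⟨Γ, hfin, h1, h2, h3, h4, h5⟩
  have hπ := Real.pi_pos
  have hnpos : 0 < n := hn
  have hθ0 : ∀ k : Fin n, 0 ≤ θ k := by
    intro k
    calc (0:ℝ) ≤ θ ⟨0, hn⟩ := hlo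
    _ ≤ θ k := hmono.monotone (by simp [Fin.le_def])
  set X : Fin n → EuclideanSpace ℝ (Fin 2) := fun k => circlePt (θ k) with hX
  have hXinj : Function.Injective X := by
    intro k l h
    by_contra hne
    have hθne : θ k ≠ θ l := fun h' => hne (hmono.injective h')
    apply hθne
    apply exp_I_inj (hθ0 k) (hhi k) (hθ0 l) (hhi l)
    rw [← toC_circlePt, ← toC_circlePt]
    exact congrArg toC h
  set off : Fin n → Fin n → ℕ := fun k l => (l.1 + n - k.1) % n with hoff
  set S : Set ℕ := {m | ∃ γ ∈ Γ, ∃ k l : Fin n, k ≠ l ∧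
      ((γ 0 = X k ∧ γ 1 = X l) ∨ (γ 0 = X l ∧ γ 1 = X k)) ∧ m = off k l} with hS
  obtain ⟨γ₀, hγ₀Γ, _⟩ := h2 ⟨0, hn⟩
  have hSne : S.Nonempty := by
    obtain ⟨k, l, hkl, hk0, hl1⟩ := (h1 γ₀ hγ₀Γ).2.2.2.2
    exact ⟨off k l, γ₀, hγ₀Γ, k, l, hkl, Or.inl ⟨hk0, hl1⟩, rfl⟩
  set m := sInf S with hm
  have hmS : m ∈ S := Nat.sInf_mem hSne
  obtain ⟨γ₁, hγ₁Γ, a, b, hab, hor1, hmoff⟩ := hmS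
  have hadj1 : ¬ CyclicAdj n a b := by
    rcases hor1 with ⟨h0, h1'⟩ | ⟨h0, h1'⟩
    · exact h5 γ₁ hγ₁Γ a b h0 h1'
    · intro hc
      exact h5 γ₁ hγ₁Γ b a h0 h1' (hc.elim Or.inr Or.inl)
  have hm2 : 2 ≤ m ∧ m ≤ n - 2 := by
    rw [hmoff]
    exact offset_lemma a.2 b.2 (fun h => hab (Fin.ext h)) hadj1
  have hn4 : 4 ≤ n := by omega
  -- the neighbour j of a, and the second path γ₂
  set j : Fin n := ⟨(a.1 + 1) % n, Nat.mod_lt _ hnpos⟩ with hj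
  obtain ⟨γ₂, hγ₂Γ, hγ₂end⟩ := h2 j
  obtain ⟨k₂, l₂, hk₂l₂, hk₂0, hl₂1⟩ := (h1 γ₂ hγ₂Γ).2.2.2.2
  have hjkl : j = k₂ ∨ j = l₂ := by
    rcases hγ₂end with h | h
    · left; exact hXinj (h.symm.trans hk₂0)
    · right; exact hXinj (h.symm.trans hl₂1)
  obtain ⟨m', hjm', hor2⟩ : ∃ m' : Fin n, j ≠ m' ∧
      ((γ₂ 0 = X j ∧ γ₂ 1 = X m') ∨ (γ₂ 0 = X m' ∧ γ₂ 1 = X j)) := by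
    rcases hjkl with h | h
    · exact ⟨l₂, fun hh => hk₂l₂ (h.symm.trans hh),
        Or.inl ⟨hk₂0.trans (congrArg X h).symm, hl₂1⟩⟩
    · exact ⟨k₂, fun hh => hk₂l₂ (hh.symm.trans h),
        Or.inr ⟨hk₂0, hl₂1.trans (congrArg X h).symm⟩⟩
  have hadj2 : ¬ CyclicAdj n j m' := by
    rcases hor2 with ⟨h0, h1'⟩ | ⟨h0, h1'⟩
    · exact h5 γ₂ hγ₂Γ j m' h0 h1'
    · intro hc
      exact h5 γ₂ hγ₂Γ m' j h0 h1' (hc.elim Or.inr Or.inl)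
  have hr'bnd : 2 ≤ off j m' ∧ off j m' ≤ n - 2 :=
    offset_lemma j.2 m'.2 (fun h => hjm' (Fin.ext h)) hadj2
  have hmin : m ≤ off j m' := by
    apply Nat.sInf_le
    exact ⟨γ₂, hγ₂Γ, j, m', hjm', hor2, rfl⟩
  set i := off a m' with hi
  have hieq : i = off j m' + 1 := by
    rw [hi, hoff]
    exact comb a.2 m'.2 rfl hr'bnd.1 hr'bnd.2
  have hmi : m < i := by omega
  have hin : i ≤ n - 1 := by omega
  -- index relations
  have hbrel : b.1 = (a.1 + m) % n := by
    rw [hmoff, hoff]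
    exact (offset_inv a.2 b.2).symm
  have hm'rel : m'.1 = (a.1 + i) % n := by
    rw [hi, hoff]
    exact (offset_inv a.2 m'.2).symm
  have harel : a.1 = (a.1 + 0) % n := by
    rw [Nat.add_zero, Nat.mod_eq_of_lt a.2]
  have hjrel : j.1 = (a.1 + 1) % n := rfl
  have hmn : m < n := by omega
  have hisn : i < n := by omega
  -- distinctness of all four indices
  have hdist : ∀ (p q : Fin n) (r1 r2 : ℕ), r1 < n → r2 < n → r1 ≠ r2 →
      p.1 = (a.1 + r1) % n → q.1 = (a.1 + r2) % n → p ≠ q := by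
    intro p q r1 r2 hr1 hr2 hne hp hq hpq
    apply hne
    apply offset_unique a.2 hr1 hr2
    rw [← hp, ← hq, hpq]
  have hab' : a ≠ b := hab
  have haj : a ≠ j := hdist a j 0 1 (by omega) (by omega) (by omega) harel hjrel
  have ham' : a ≠ m' := hdist a m' 0 i (by omega) hisn (by omega) harel hm'rel
  have hbj : b ≠ j := hdist b j m 1 hmn (by omega) (by omega) hbrel hjrel
  have hbm' : b ≠ m' := hdist b m' m i hmn hisn (by omega) hbrel hm'rel
  -- γ₁ ≠ γ₂
  have hABud : ∀ p : Fin n, (γ₁ 0 = X p ∨ γ₁ 1 = X p) → p = a ∨ p = b := by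
    intro p hp
    rcases hor1 with ⟨h0, h1'⟩ | ⟨h0, h1'⟩ <;> rcases hp with h | h
    · exact Or.inl (hXinj (by rw [← h0, h])).symm
    · exact Or.inr (hXinj (by rw [← h1', h])).symm
    · exact Or.inr (hXinj (by rw [← h0, h])).symm
    · exact Or.inl (hXinj (by rw [← h1', h])).symm
  have hγne : γ₁ ≠ γ₂ := by
    intro h
    have h0 : γ₁ 0 = γ₂ 0 := by rw [h]
    have hXj : γ₁ 0 = X j ∨ γ₁ 0 = X m' := by
      rcases hor2 with ⟨hh0, _⟩ | ⟨hh0, _⟩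
      · left; rw [h0, hh0]
      · right; rw [h0, hh0]
    rcases hXj with hh | hh
    · rcases hABud j (Or.inl hh) with h' | h'
      · exact haj h'.symm
      · exact hbj h'.symm
    · rcases hABud m' (Or.inl hh) with h' | h'
      · exact ham' h'.symm
      · exact hbm' h'.symm
  -- images are disjoint
  have hdisj12 : ∀ s ∈ Icc (0:ℝ) 1, ∀ t ∈ Icc (0:ℝ) 1, γ₁ s ≠ γ₂ t := by
    intro s hs t ht heq
    have hsub := h4 γ₁ hγ₁Γ γ₂ hγ₂Γ hγne
    have hmem' : γ₁ s ∈ (γ₁ '' Icc 0 1 ∩ γ₂ '' Icc 0 1) :=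
      ⟨⟨s, hs, rfl⟩, ⟨t, ht, heq.symm⟩⟩
    obtain ⟨hmem1, hmem2⟩ := hsub hmem'
    have hv1 : γ₁ s = X a ∨ γ₁ s = X b := by
      rcases hor1 with ⟨h0, h1'⟩ | ⟨h0, h1'⟩ <;> rcases hmem1 with h | h
      · left; rw [h, h0]
      · right; rw [Set.mem_singleton_iff.mp h, h1']
      · right; rw [h, h0]
      · left; rw [Set.mem_singleton_iff.mp h, h1']
    have hv2 : γ₁ s = X j ∨ γ₁ s = X m' := by
      rcases hor2 with ⟨h0, h1'⟩ | ⟨h0, h1'⟩ <;> rcases hmem2 with h | h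
      · left; rw [h, h0]
      · right; rw [Set.mem_singleton_iff.mp h, h1']
      · right; rw [h, h0]
      · left; rw [Set.mem_singleton_iff.mp h, h1']
    rcases hv1 with h | h <;> rcases hv2 with h' | h'
    · exact haj (hXinj (h.symm.trans h'))
    · exact ham' (hXinj (h.symm.trans h'))
    · exact hbj (hXinj (h.symm.trans h'))
    · exact hbm' (hXinj (h.symm.trans h'))
  -- the angle coordinates
  set ang : ℕ → ℝ := fun r => θ ⟨(a.1 + r) % n, Nat.mod_lt _ hnpos⟩ +
      (if a.1 + r < n then 0 else 2*π) with hang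
  have hmodval : ∀ r, r < n → (a.1 + r) % n = if a.1 + r < n then a.1 + r else a.1 + r - n := by
    intro r hr
    exact mod_char (by omega) hnpos
  have hangmono : ∀ r1 r2, r1 < r2 → r2 < n → ang r1 < ang r2 := by
    intro r1 r2 hlt hr2
    simp only [hang]
    rcases lt_or_ge (a.1 + r2) n with h2 | h2
    · have h1 : a.1 + r1 < n := by omega
      rw [if_pos h1, if_pos h2]
      have e1 : (⟨(a.1 + r1) % n, Nat.mod_lt _ hnpos⟩ : Fin n) = ⟨a.1+r1, h1⟩ :=
        Fin.ext (Nat.mod_eq_of_lt h1)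
      have e2 : (⟨(a.1 + r2) % n, Nat.mod_lt _ hnpos⟩ : Fin n) = ⟨a.1+r2, h2⟩ :=
        Fin.ext (Nat.mod_eq_of_lt h2)
      rw [e1, e2]
      have := hmono (show (⟨a.1+r1, h1⟩ : Fin n) < ⟨a.1+r2, h2⟩ by
        simp only [Fin.lt_def]; omega)
      linarith
    · rcases lt_or_ge (a.1 + r1) n with h1 | h1
      · rw [if_pos h1, if_neg (by omega)]
        have hlt2π := hhi ⟨(a.1+r1) % n, Nat.mod_lt _ hnpos⟩
        have hge0 := hθ0 ⟨(a.1+r2) % n, Nat.mod_lt _ hnpos⟩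
        linarith
      · rw [if_neg (by omega), if_neg (by omega)]
        have e1 : (⟨(a.1 + r1) % n, Nat.mod_lt _ hnpos⟩ : Fin n) = ⟨a.1+r1-n, by omega⟩ :=
          Fin.ext (by simp only []; rw [hmodval r1 (by omega), if_neg (by omega)])
        have e2 : (⟨(a.1 + r2) % n, Nat.mod_lt _ hnpos⟩ : Fin n) = ⟨a.1+r2-n, by omega⟩ :=
          Fin.ext (by simp only []; rw [hmodval r2 hr2, if_neg (by omega)])
        rw [e1, e2]
        have := hmono (show (⟨a.1+r1-n, by omega⟩ : Fin n) < ⟨a.1+r2-n, by omega⟩ by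
          simp only [Fin.lt_def]; omega)
        linarith
  have hangwrap : ∀ r, r < n → ang r < ang 0 + 2*π := by
    intro r hr
    simp only [hang]
    rw [if_pos (by omega : a.1 + 0 < n)]
    rcases lt_or_ge (a.1 + r) n with h2 | h2
    · rw [if_pos h2]
      have hlt2π := hhi ⟨(a.1+r) % n, Nat.mod_lt _ hnpos⟩
      have hge0 := hθ0 ⟨(a.1+0) % n, Nat.mod_lt _ hnpos⟩
      linarith
    · rw [if_neg (by omega)]
      have := hmono (show (⟨(a.1+r) % n, Nat.mod_lt _ hnpos⟩ : Fin n)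
          < ⟨(a.1+0) % n, Nat.mod_lt _ hnpos⟩ by
        simp only [Fin.lt_def]
        rw [Nat.add_zero, Nat.mod_eq_of_lt a.2, hmodval r hr, if_neg (by omega)]
        omega)
      linarith
  have hangexp : ∀ r, r < n →
      toC (X ⟨(a.1 + r) % n, Nat.mod_lt _ hnpos⟩)
        = Complex.exp (((ang r : ℝ) : ℂ) * Complex.I) := by
    intro r hr
    simp only [hX, hang]
    rw [toC_circlePt]
    rcases lt_or_ge (a.1 + r) n with h2 | h2
    · rw [if_pos h2, add_zero]
    · rw [if_neg (by omega)]
      exact (exp_I_two_pi_add _).symm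
  -- fix the Fin identifications
  have haFin : a = ⟨(a.1 + 0) % n, Nat.mod_lt _ hnpos⟩ := Fin.ext harel
  have hjFin : j = ⟨(a.1 + 1) % n, Nat.mod_lt _ hnpos⟩ := Fin.ext hjrel
  have hbFin : b = ⟨(a.1 + m) % n, Nat.mod_lt _ hnpos⟩ := Fin.ext hbrel
  have hm'Fin : m' = ⟨(a.1 + i) % n, Nat.mod_lt _ hnpos⟩ := Fin.ext hm'rel
  -- the complex-valued paths
  have hγ₁p := h1 γ₁ hγ₁Γ
  have hγ₂p := h1 γ₂ hγ₂Γ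
  have hδ₁c : ContinuousOn (toC ∘ γ₁) (Icc 0 1) :=
    toC_isometry.continuous.comp_continuousOn hγ₁p.1
  have hδ₂c : ContinuousOn (toC ∘ γ₂) (Icc 0 1) :=
    toC_isometry.continuous.comp_continuousOn hγ₂p.1
  have hδ₁b : ∀ t ∈ Icc (0:ℝ) 1, ‖(toC ∘ γ₁) t‖ ≤ 1 := by
    intro t ht
    rw [Function.comp_apply, toC_abs]
    exact hγ₁p.2.2.1 t ht
  have hδ₂b : ∀ t ∈ Icc (0:ℝ) 1, ‖(toC ∘ γ₂) t‖ ≤ 1 := by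
    intro t ht
    rw [Function.comp_apply, toC_abs]
    exact hγ₂p.2.2.1 t ht
  obtain ⟨α, hαc, hα1, hα0, hα1', hαrep⟩ := orient hδ₁c hδ₁b
    (P := toC (X a)) (Q := toC (X b))
    (by
      rcases hor1 with ⟨h0, h1'⟩ | ⟨h0, h1'⟩
      · exact Or.inl ⟨by rw [Function.comp_apply, h0], by rw [Function.comp_apply, h1']⟩
      · exact Or.inr ⟨by rw [Function.comp_apply, h0], by rw [Function.comp_apply, h1']⟩)
  obtain ⟨β, hβc, hβ1, hβ0, hβ1', hβrep⟩ := orient hδ₂c hδ₂b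
    (P := toC (X j)) (Q := toC (X m'))
    (by
      rcases hor2 with ⟨h0, h1'⟩ | ⟨h0, h1'⟩
      · exact Or.inl ⟨by rw [Function.comp_apply, h0], by rw [Function.comp_apply, h1']⟩
      · exact Or.inr ⟨by rw [Function.comp_apply, h0], by rw [Function.comp_apply, h1']⟩)
  -- apply the crossing lemma
  apply crossing (A := ang 0) (B := ang 1) (C := ang m) (D := ang i)
    (hangmono 0 1 (by omega) (by omega))
    (hangmono 1 m (by omega) hmn)
    (hangmono m i hmi hisn)
    (hangwrap i hisn)
    hαc hβc hα1 hβ1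
    (by rw [hα0, haFin]; exact hangexp 0 (by omega))
    (by rw [hα1', hbFin]; exact hangexp m hmn)
    (by rw [hβ0, hjFin]; exact hangexp 1 (by omega))
    (by rw [hβ1', hm'Fin]; exact hangexp i hisn)
  intro s hs t ht heq
  obtain ⟨s', hs', hαs⟩ := hαrep s hs
  obtain ⟨t', ht', hβt⟩ := hβrep t ht
  rw [hαs, hβt] at heq
  exact hdisj12 s' hs' t' ht' (toC_isometry.injective heq)
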